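/- Let (T, M, μ) be a lightly mixing probability measure-preserving system, i.e., for all measurable sets A, B of positive measure, liminf_n μ(T^{-n}A ∩ B) > 0. Then every sequence (A_n) taking only finitely many distinct set values (possibly including measure-zero sets) and satisfying ∑ μ(A_n) = ∞ is Borel–Cantelli for T. -/

import Mathlib

open MeasureTheory Filter Metric ENNReal Topology

/-- In a lightly mixing system, every sequence taking finitely many distinct set values
with divergent measure sum is Borel–Cantelli. -/
theorem stmt12 {M : Type*} [MeasurableSpace M] (μ : Measure M) [IsProbabilityMeasure μ]
    (T : M → M) (hT : MeasurePreserving T μ μ)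
    (hlm : ∀ A B : Set M, MeasurableSet A → MeasurableSet B → 0 < μ A → 0 < μ B →
      0 < liminf (fun n => μ ((T^[n]) ⁻¹' A ∩ B)) atTop)
    (A : ℕ → Set M) (hA : ∀ n, MeasurableSet (A n)) (hfin : (Set.range A).Finite)
    (hdiv : ∑' n, μ (A n) = ⊤) :
    μ {x | ∃ᶠ n in atTop, T^[n] x ∈ A n} = 1 := by
  -- Step 1: find a value S with positive measure hit infinitely often
  obtain ⟨S, hSpos, hSinf⟩ : ∃ S, 0 < μ S ∧ {n | A n = S}.Infinite := by
    by_contra h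
    push_neg at h
    have hPfin : {n | μ (A n) ≠ 0}.Finite := by
      have hsub : {n | μ (A n) ≠ 0} ⊆
          ⋃ v ∈ hfin.toFinset, {n | A n = v ∧ μ (A n) ≠ 0} := by
        intro n hn
        simp only [Set.mem_iUnion]
        exact ⟨A n, by simp [Set.Finite.mem_toFinset], rfl, hn⟩
      refine Set.Finite.subset ?_ hsub
      refine Set.Finite.biUnion hfin.toFinset.finite_toSet ?_
      intro v _
      by_cases hv0 : 0 < μ v
      · have hfib := h v hv0
        exact hfib.subset fun n hn => hn.1
      · have hv0' : μ v = 0 := le_antisymm (not_lt.mp hv0) zero_le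
        have : {n | A n = v ∧ μ (A n) ≠ 0} = ∅ := by
          ext n
          simp only [Set.mem_setOf_eq, Set.mem_empty_iff_false, iff_false, not_and]
          rintro rfl
          simp [hv0']
        rw [this]; exact Set.finite_empty
    have htop : ∑' n, μ (A n) ≠ ⊤ := by
      rw [tsum_eq_sum (s := hPfin.toFinset)
        (fun n hn => by simpa using fun hne => hn (hPfin.mem_toFinset.mpr hne))]
      exact (ENNReal.sum_lt_top.mpr fun n _ => measure_lt_top μ _).ne
    exact htop hdiv
  obtain ⟨n₀, hn₀⟩ := hSinf.nonempty
  have hSm : MeasurableSet S := hn₀ ▸ hA n₀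
  have hTm : ∀ n, Measurable (T^[n]) := fun n => hT.measurable.iterate n
  set C : ℕ → Set M := fun N => {x | ∀ n, N ≤ n → A n = S → T^[n] x ∉ S} with hCdef
  have hCm : ∀ N, MeasurableSet (C N) := by
    intro N
    have : C N = ⋂ n, ⋂ (_ : N ≤ n) (_ : A n = S), (T^[n] ⁻¹' S)ᶜ := by
      ext x; simp [hCdef, Set.mem_iInter]
    rw [this]
    exact MeasurableSet.iInter fun n => MeasurableSet.iInter fun _ =>
      MeasurableSet.iInter fun _ => ((hTm n) hSm).compl
  have hC0 : ∀ N, μ (C N) = 0 := by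
    intro N
    by_contra h0
    have hpos : 0 < μ (C N) := pos_iff_ne_zero.mpr h0
    have hlim := hlm S (C N) hSm (hCm N) hSpos hpos
    have hev : ∀ᶠ n in atTop, 0 < μ (T^[n] ⁻¹' S ∩ C N) :=
      eventually_lt_of_lt_liminf hlim
    obtain ⟨N', hN'⟩ := eventually_atTop.mp hev
    obtain ⟨n, hnI, hn⟩ := hSinf.exists_gt (max N N')
    have hempty : T^[n] ⁻¹' S ∩ C N = ∅ := by
      ext x
      simp only [Set.mem_inter_iff, Set.mem_preimage, Set.mem_empty_iff_false, iff_false]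
      rintro ⟨hx1, hx2⟩
      exact hx2 n (le_of_max_le_left hn.le) hnI hx1
    have := hN' n (le_of_max_le_right hn.le)
    rw [hempty] at this
    simp at this
  set E : Set M := {x | ∃ᶠ n in atTop, A n = S ∧ T^[n] x ∈ S} with hEdef
  have hEc : Eᶜ ⊆ ⋃ N, C N := by
    intro x hx
    have : ∀ᶠ n in atTop, ¬(A n = S ∧ T^[n] x ∈ S) := not_frequently.mp hx
    obtain ⟨N, hN⟩ := eventually_atTop.mp this
    exact Set.mem_iUnion.mpr ⟨N, fun n hn hAn hxS => hN n hn ⟨hAn, hxS⟩⟩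
  have hEc0 : μ Eᶜ = 0 :=
    measure_mono_null hEc (measure_iUnion_null hC0)
  have hE1 : 1 ≤ μ E := by
    have : (1 : ℝ≥0∞) = μ (E ∪ Eᶜ) := by rw [Set.union_compl_self, measure_univ]
    calc (1 : ℝ≥0∞) = μ (E ∪ Eᶜ) := this
    _ ≤ μ E + μ Eᶜ := measure_union_le _ _
    _ = μ E := by rw [hEc0, add_zero]
  refine le_antisymm prob_le_one ?_
  refine le_trans hE1 (measure_mono ?_)
  intro x hx
  exact hx.mono fun n hn => hn.1 ▸ hn.2
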